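/- Hyperboloid vs sphere (sphere of imaginary radius): in ℝ^{n+1} with the bilinear form B(x,y) = −x₀y₀ + x₁y₁ + ⋯ + xₙyₙ, the set H = { x : B(x,x) = −1, x₀ > 0 } with distance d(x,y) = arccosh(−B(x,y)) is a metric space; i.e., −B(x,y) ≥ 1 for all x, y ∈ H with equality iff x = y, and d satisfies the triangle inequality. -/

import Mathlib

open Real

/-- The Lorentzian bilinear form `B(x,y) = −x₀y₀ + x₁y₁ + ⋯ + xₙyₙ` on `ℝ^{n+1}`. -/
def lorentz {n : ℕ} (x y : Fin (n + 1) → ℝ) : ℝ :=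
  (∑ i, x i * y i) - 2 * x 0 * y 0

/-- The upper sheet of the hyperboloid `B(x,x) = −1`, `x₀ > 0`. -/
def Hyperboloid (n : ℕ) : Set (Fin (n + 1) → ℝ) :=
  {x | lorentz x x = -1 ∧ 0 < x 0}

/-- The inverse hyperbolic cosine on `[1, ∞)`. -/
noncomputable def arcosh (x : ℝ) : ℝ := Real.log (x + Real.sqrt (x ^ 2 - 1))

lemma lorentz_split {n : ℕ} (x y : Fin (n + 1) → ℝ) :
    lorentz x y = (∑ i : Fin n, x i.succ * y i.succ) - x 0 * y 0 := by
  simp [lorentz, Fin.sum_univ_succ]; ring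

-- positive semidefinite on the orthocomplement of y
lemma lorentz_nonneg_of_orth {n : ℕ} {w y : Fin (n + 1) → ℝ}
    (hy : y ∈ Hyperboloid n) (hw : lorentz w y = 0) : 0 ≤ lorentz w w := by
  obtain ⟨hyy, hy0⟩ := hy
  rw [lorentz_split] at hyy hw ⊢
  set A := ∑ i : Fin n, w i.succ * w i.succ with hA
  set B := ∑ i : Fin n, y i.succ * y i.succ with hB
  set C := ∑ i : Fin n, w i.succ * y i.succ with hC
  have hAnn : 0 ≤ A := Finset.sum_nonneg fun i _ => mul_self_nonneg _
  have hcs : C ^ 2 ≤ A * B := by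
    have := Finset.sum_mul_sq_le_sq_mul_sq Finset.univ (fun i : Fin n => w i.succ)
      (fun i : Fin n => y i.succ)
    simpa [hA, hB, hC, sq] using this
  have h1 : C ^ 2 = (w 0) ^ 2 * (y 0) ^ 2 := by
    have : C = w 0 * y 0 := by linarith
    rw [this]; ring
  have h2 : B = (y 0) ^ 2 - 1 := by nlinarith
  nlinarith [h1, h2, hcs, hAnn, mul_pos hy0 hy0]

lemma lorentz_comm {n : ℕ} (x y : Fin (n + 1) → ℝ) : lorentz x y = lorentz y x := by
  simp [lorentz, mul_comm]; ring

lemma lorentz_sub_smul_left {n : ℕ} (x y z : Fin (n + 1) → ℝ) (t : ℝ) :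
    lorentz (x - t • y) z = lorentz x z - t * lorentz y z := by
  have h : ∀ i, (x i - t * y i) * z i = x i * z i - t * (y i * z i) := by intro i; ring
  simp [lorentz, h, Finset.sum_sub_distrib, ← Finset.mul_sum]
  ring

lemma lorentz_add_smul_left {n : ℕ} (x y z : Fin (n + 1) → ℝ) (t : ℝ) :
    lorentz (x + t • y) z = lorentz x z + t * lorentz y z := by
  have h : ∀ i, (x i + t * y i) * z i = x i * z i + t * (y i * z i) := by intro i; ring
  simp [lorentz, h, Finset.sum_add_distrib, ← Finset.mul_sum]
  ring

lemma lorentz_cs_orth {n : ℕ} {u v y : Fin (n + 1) → ℝ} (hy : y ∈ Hyperboloid n)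
    (hu : lorentz u y = 0) (hv : lorentz v y = 0) :
    (lorentz u v) ^ 2 ≤ lorentz u u * lorentz v v := by
  have key : ∀ t : ℝ, 0 ≤ lorentz v v * (t * t) + (2 * lorentz u v) * t + lorentz u u := by
    intro t
    have horth : lorentz (u + t • v) y = 0 := by
      rw [lorentz_add_smul_left, hu, hv]; ring
    have := lorentz_nonneg_of_orth hy horth
    have hexp : lorentz (u + t • v) (u + t • v)
        = lorentz v v * (t * t) + (2 * lorentz u v) * t + lorentz u u := by
      rw [lorentz_add_smul_left, lorentz_comm u (u + t • v), lorentz_comm v (u + t • v),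
        lorentz_add_smul_left, lorentz_add_smul_left, lorentz_comm v u]
      ring
    linarith [hexp ▸ this]
  have hd := discrim_le_zero key
  rw [discrim] at hd
  nlinarith [hd]

lemma lorentz_one_le {n : ℕ} {x y : Fin (n + 1) → ℝ}
    (hx : x ∈ Hyperboloid n) (hy : y ∈ Hyperboloid n) : 1 ≤ -lorentz x y := by
  obtain ⟨hxx, hx0⟩ := hx
  obtain ⟨hyy, hy0⟩ := hy
  rw [lorentz_split] at hxx hyy ⊢
  set A := ∑ i : Fin n, x i.succ * x i.succ with hA
  set B := ∑ i : Fin n, y i.succ * y i.succ with hB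
  set C := ∑ i : Fin n, x i.succ * y i.succ with hC
  have hAnn : 0 ≤ A := Finset.sum_nonneg fun i _ => mul_self_nonneg _
  have hBnn : 0 ≤ B := Finset.sum_nonneg fun i _ => mul_self_nonneg _
  have hcs : C ^ 2 ≤ A * B := by
    have := Finset.sum_mul_sq_le_sq_mul_sq Finset.univ (fun i : Fin n => x i.succ)
      (fun i : Fin n => y i.succ)
    simpa [hA, hB, hC, sq] using this
  have hxy : 0 < x 0 * y 0 := mul_pos hx0 hy0
  have hsq : (x 0 * y 0) ^ 2 = (1 + A) * (1 + B) := by nlinarith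
  rcases le_or_gt (1 + C) 0 with h | h
  · nlinarith
  · by_contra hcon
    push_neg at hcon
    have h2 : (x 0 * y 0) ^ 2 < (1 + C) ^ 2 := by nlinarith
    have h3 : A + B < 2 * C := by nlinarith
    nlinarith [sq_nonneg (A - B)]

lemma lorentz_eq_iff {n : ℕ} {x y : Fin (n + 1) → ℝ}
    (hx : x ∈ Hyperboloid n) (hy : y ∈ Hyperboloid n) : -lorentz x y = 1 ↔ x = y := by
  constructor
  · intro h
    obtain ⟨hxx, hx0⟩ := hx
    obtain ⟨hyy, hy0⟩ := hy
    rw [lorentz_split] at hxx hyy h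
    set A := ∑ i : Fin n, x i.succ * x i.succ with hA
    set B := ∑ i : Fin n, y i.succ * y i.succ with hB
    set C := ∑ i : Fin n, x i.succ * y i.succ with hC
    have hcs : C ^ 2 ≤ A * B := by
      have := Finset.sum_mul_sq_le_sq_mul_sq Finset.univ (fun i : Fin n => x i.succ)
        (fun i : Fin n => y i.succ)
      simpa [hA, hB, hC, sq] using this
    -- x₀ y₀ = 1 + C, squares give (1+A)(1+B) = (1+C)², so A + B ≤ 2C
    have hsq : (1 + A) * (1 + B) = (1 + C) ^ 2 := by nlinarith
    have hAB : A + B ≤ 2 * C := by nlinarith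
    have hsum : ∑ i : Fin n, (x i.succ - y i.succ) ^ 2 = 0 := by
      have hle : ∑ i : Fin n, (x i.succ - y i.succ) ^ 2 = A + B - 2 * C := by
        simp only [hA, hB, hC, Finset.mul_sum, ← Finset.sum_add_distrib,
          ← Finset.sum_sub_distrib]
        exact Finset.sum_congr rfl fun i _ => by ring
      have hnn : 0 ≤ ∑ i : Fin n, (x i.succ - y i.succ) ^ 2 :=
        Finset.sum_nonneg fun i _ => sq_nonneg _
      linarith
    have hsucc : ∀ i : Fin n, x i.succ = y i.succ := by
      intro i
      have := (Finset.sum_eq_zero_iff_of_nonneg (fun i _ => sq_nonneg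
        (x i.succ - y i.succ))).mp hsum i (Finset.mem_univ i)
      have := pow_eq_zero_iff (n := 2) (by norm_num) |>.mp this
      linarith [sub_eq_zero.mp this]
    have hAC : A = C := by
      rw [hA, hC]; exact Finset.sum_congr rfl fun i _ => by rw [hsucc i]
    have hBC : B = C := by
      rw [hB, hC]; exact Finset.sum_congr rfl fun i _ => by rw [hsucc i, mul_comm]
    have h0 : x 0 = y 0 := by
      have hz : (x 0 - y 0) * (x 0 + y 0) = 0 := by nlinarith
      rcases mul_eq_zero.mp hz with h' | h'
      · linarith
      · linarith
    funext i
    induction i using Fin.cases with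
    | zero => exact h0
    | succ j => exact hsucc j
  · rintro rfl
    have := hx.1
    linarith

lemma arcosh_mono {a b : ℝ} (ha : 1 ≤ a) (hab : a ≤ b) : _root_.arcosh a ≤ _root_.arcosh b := by
  unfold _root_.arcosh
  have h1 : (0:ℝ) < a + Real.sqrt (a ^ 2 - 1) := by
    have := Real.sqrt_nonneg (a ^ 2 - 1); linarith
  apply Real.log_le_log h1
  have : Real.sqrt (a ^ 2 - 1) ≤ Real.sqrt (b ^ 2 - 1) :=
    Real.sqrt_le_sqrt (by nlinarith)
  linarith

lemma arcosh_add {a b : ℝ} (ha : 1 ≤ a) (hb : 1 ≤ b) :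
    _root_.arcosh a + _root_.arcosh b
      = _root_.arcosh (a * b + Real.sqrt (a ^ 2 - 1) * Real.sqrt (b ^ 2 - 1)) := by
  set sa := Real.sqrt (a ^ 2 - 1) with hsa
  set sb := Real.sqrt (b ^ 2 - 1) with hsb
  have hsa2 : sa ^ 2 = a ^ 2 - 1 := Real.sq_sqrt (by nlinarith)
  have hsb2 : sb ^ 2 = b ^ 2 - 1 := Real.sq_sqrt (by nlinarith)
  have hsann : 0 ≤ sa := Real.sqrt_nonneg _
  have hsbnn : 0 ≤ sb := Real.sqrt_nonneg _
  have hinner : Real.sqrt ((a * b + sa * sb) ^ 2 - 1) = a * sb + b * sa := by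
    have heq : (a * b + sa * sb) ^ 2 - 1 = (a * sb + b * sa) ^ 2 := by nlinarith
    rw [heq, Real.sqrt_sq (by positivity)]
  unfold _root_.arcosh
  rw [hinner, ← Real.log_mul (by positivity) (by positivity)]
  congr 1
  ring

lemma arcosh_nonneg {a : ℝ} (ha : 1 ≤ a) : 0 ≤ _root_.arcosh a := by
  unfold _root_.arcosh
  apply Real.log_nonneg
  have := Real.sqrt_nonneg (a ^ 2 - 1); linarith

lemma lorentz_key {n : ℕ} {x y z : Fin (n + 1) → ℝ}
    (hx : x ∈ Hyperboloid n) (hy : y ∈ Hyperboloid n) (hz : z ∈ Hyperboloid n) :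
    -lorentz x z ≤ (-lorentz x y) * (-lorentz y z)
      + Real.sqrt ((-lorentz x y) ^ 2 - 1) * Real.sqrt ((-lorentz y z) ^ 2 - 1) := by
  set t1 := -lorentz x y with ht1
  set t2 := -lorentz y z with ht2
  set t3 := -lorentz x z with ht3
  set u := x - t1 • y with hu
  set v := z - t2 • y with hv
  have hyy : lorentz y y = -1 := hy.1
  have huy : lorentz u y = 0 := by
    rw [hu, lorentz_sub_smul_left, hyy]; rw [ht1]; ring
  have hvy : lorentz v y = 0 := by
    rw [hv, lorentz_sub_smul_left, hyy, lorentz_comm z y]; rw [ht2]; ring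
  have huu : lorentz u u = t1 ^ 2 - 1 := by
    rw [hu, lorentz_sub_smul_left, lorentz_comm x (x - t1 • y), lorentz_comm y (x - t1 • y),
      lorentz_sub_smul_left, lorentz_sub_smul_left, hyy, hx.1, lorentz_comm y x]
    rw [ht1]; ring
  have hvv : lorentz v v = t2 ^ 2 - 1 := by
    rw [hv, lorentz_sub_smul_left, lorentz_comm z (z - t2 • y), lorentz_comm y (z - t2 • y),
      lorentz_sub_smul_left, lorentz_sub_smul_left, hyy, hz.1, lorentz_comm y z]
    rw [ht2, lorentz_comm z y]; ring
  have huv : lorentz u v = t1 * t2 - t3 := by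
    rw [hu, lorentz_sub_smul_left, lorentz_comm x v, lorentz_comm y v, hv,
      lorentz_sub_smul_left, lorentz_sub_smul_left, hyy, lorentz_comm z x, lorentz_comm y x,
      lorentz_comm z y]
    rw [ht1, ht2, ht3]; ring
  have hcs := lorentz_cs_orth hy huy hvy
  rw [huu, hvv, huv] at hcs
  have h1 : t3 - t1 * t2 ≤ Real.sqrt ((t1 ^ 2 - 1) * (t2 ^ 2 - 1)) := by
    calc t3 - t1 * t2 ≤ |t1 * t2 - t3| := by
          rw [abs_sub_comm]; exact le_abs_self _
      _ = Real.sqrt ((t1 * t2 - t3) ^ 2) := (Real.sqrt_sq_eq_abs _).symm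
      _ ≤ Real.sqrt ((t1 ^ 2 - 1) * (t2 ^ 2 - 1)) := Real.sqrt_le_sqrt hcs
  have ht1' : 1 ≤ t1 := lorentz_one_le hx hy
  have ht2' : 1 ≤ t2 := lorentz_one_le hy hz
  rw [← Real.sqrt_mul (by nlinarith) (t2 ^ 2 - 1)]
  linarith

/-- The hyperboloid as a sphere of imaginary radius: on the upper sheet `H` of the hyperboloid,
`−B(x,y) ≥ 1`, with equality iff `x = y`, and `d(x,y) = arccosh(−B(x,y))` satisfies the
triangle inequality, so `(H, d)` is a metric space. -/
theorem hyperboloid_metric (n : ℕ) :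
    (∀ x ∈ Hyperboloid n, ∀ y ∈ Hyperboloid n, 1 ≤ -lorentz x y) ∧
    (∀ x ∈ Hyperboloid n, ∀ y ∈ Hyperboloid n, (-lorentz x y = 1 ↔ x = y)) ∧
    (∀ x ∈ Hyperboloid n, ∀ y ∈ Hyperboloid n, ∀ z ∈ Hyperboloid n,
      _root_.arcosh (-lorentz x z) ≤ _root_.arcosh (-lorentz x y) + _root_.arcosh (-lorentz y z)) := by
  refine ⟨fun x hx y hy => lorentz_one_le hx hy,
    fun x hx y hy => lorentz_eq_iff hx hy, fun x hx y hy z hz => ?_⟩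
  have ht1 : 1 ≤ -lorentz x y := lorentz_one_le hx hy
  have ht2 : 1 ≤ -lorentz y z := lorentz_one_le hy hz
  have ht3 : 1 ≤ -lorentz x z := lorentz_one_le hx hz
  rw [_root_.arcosh_add ht1 ht2]
  exact _root_.arcosh_mono ht3 (lorentz_key hx hy hz)
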